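/- arXiv:1608.01176 — 2 statements merged into one kernel-verified Lean document; each statement's English description precedes it below -/
import Mathlib

section
/- Let ω > 0 and let S(x, φ) = ∫₀^ω [½(x(t)² + 1)φ̇(t)² + ½ẋ(t)² − x(t)·sin φ(t)] dt. Then for every pair (x, φ) ∈ H¹_o(ℝ) × H¹_o(ℝ) one has S(x, φ) ≥ ½‖φ̇‖²_{L²(0,ω)} + ½‖ẋ‖²_{L²(0,ω)} − (ω^{3/2}/√2)·‖ẋ‖_{L²(0,ω)}. -/
open MeasureTheory

noncomputable section

/-- A function `u : ℝ → ℝ` belongs to `H¹_loc(ℝ)` (we work with continuous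
representatives): `u` is continuous and is the indefinite integral of a locally
square-integrable weak derivative. -/
def IsLocH1 (u : ℝ → ℝ) : Prop :=
  Continuous u ∧
    ∃ u' : ℝ → ℝ,
      (∀ n : ℕ, MemLp u' 2 (volume.restrict (Set.Ioo (-(n : ℝ)) n))) ∧
      ∀ t : ℝ, u t = u 0 + ∫ s in (0 : ℝ)..t, u' s

/-- A locally `L²` function is interval integrable. -/
lemma intervalIntegrable_of_memL2loc {f : ℝ → ℝ}
    (hf : ∀ n : ℕ, MemLp f 2 (volume.restrict (Set.Ioo (-(n : ℝ)) n)))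
    (a b : ℝ) : IntervalIntegrable f volume a b := by
  obtain ⟨n, hn⟩ := exists_nat_gt (max |a| |b|)
  haveI : IsFiniteMeasure (volume.restrict (Set.Ioo (-(n : ℝ)) n)) :=
    ⟨by rw [Measure.restrict_apply_univ]; exact measure_Ioo_lt_top⟩
  have hint : IntegrableOn f (Set.Ioo (-(n : ℝ)) n) volume :=
    (hf n).integrable one_le_two
  rw [intervalIntegrable_iff]
  refine hint.mono_set fun x hx => ?_
  have hxIcc := Set.uIoc_subset_uIcc hx
  rw [Set.mem_uIcc] at hxIcc
  have h1 := le_abs_self a; have h2 := neg_abs_le a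
  have h3 := le_abs_self b; have h4 := neg_abs_le b
  have h5 := le_max_left |a| |b|; have h6 := le_max_right |a| |b|
  constructor
  · rcases hxIcc with ⟨ha1, _⟩ | ⟨hb1, _⟩ <;> linarith
  · rcases hxIcc with ⟨_, ha2⟩ | ⟨_, hb2⟩ <;> linarith

lemma IsLocH1.zero : IsLocH1 (0 : ℝ → ℝ) :=
  ⟨continuous_const, 0, fun _ => MemLp.zero, fun t => by simp⟩

lemma IsLocH1.add {u v : ℝ → ℝ} (hu : IsLocH1 u) (hv : IsLocH1 v) : IsLocH1 (u + v) := by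
  obtain ⟨hcu, u', hu1, hu2⟩ := hu
  obtain ⟨hcv, v', hv1, hv2⟩ := hv
  refine ⟨hcu.add hcv, u' + v', fun n => (hu1 n).add (hv1 n), fun t => ?_⟩
  have hiu := intervalIntegrable_of_memL2loc hu1 0 t
  have hiv := intervalIntegrable_of_memL2loc hv1 0 t
  simp only [Pi.add_apply]
  rw [intervalIntegral.integral_add hiu hiv, hu2 t, hv2 t]
  ring

lemma IsLocH1.smul (c : ℝ) {u : ℝ → ℝ} (hu : IsLocH1 u) : IsLocH1 (c • u) := by
  obtain ⟨hcu, u', hu1, hu2⟩ := hu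
  refine ⟨hcu.const_smul c, fun s => c * u' s, fun n => (hu1 n).const_mul c, fun t => ?_⟩
  simp only [Pi.smul_apply, smul_eq_mul]
  rw [intervalIntegral.integral_const_mul, hu2 t]
  ring

lemma IsLocH1.neg {u : ℝ → ℝ} (hu : IsLocH1 u) : IsLocH1 (-u) := by
  simpa using hu.smul (-1)

/-- The space `H¹_loc(ℝ)` (continuous representatives). -/
def H1loc : Type := { u : ℝ → ℝ // IsLocH1 u }

namespace H1loc

/-- A weak derivative of `u ∈ H¹_loc(ℝ)` (it is unique up to a.e. equality). -/
def wderiv (u : H1loc) : ℝ → ℝ := u.2.2.choose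

lemma wderiv_memL2loc (u : H1loc) :
    ∀ n : ℕ, MemLp (wderiv u) 2 (volume.restrict (Set.Ioo (-(n : ℝ)) n)) :=
  u.2.2.choose_spec.1

lemma integral_wderiv (u : H1loc) (t : ℝ) :
    u.1 t = u.1 0 + ∫ s in (0 : ℝ)..t, wderiv u s :=
  u.2.2.choose_spec.2 t

instance : Zero H1loc := ⟨⟨0, IsLocH1.zero⟩⟩
instance : Add H1loc := ⟨fun u v => ⟨u.1 + v.1, u.2.add v.2⟩⟩
instance : Neg H1loc := ⟨fun u => ⟨-u.1, u.2.neg⟩⟩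
instance : SMul ℝ H1loc := ⟨fun c u => ⟨c • u.1, u.2.smul c⟩⟩

@[simp] lemma coe_zero : (0 : H1loc).1 = (0 : ℝ → ℝ) := rfl
@[simp] lemma coe_add (u v : H1loc) : (u + v).1 = u.1 + v.1 := rfl
@[simp] lemma coe_neg (u : H1loc) : (-u).1 = -u.1 := rfl
@[simp] lemma coe_smul (c : ℝ) (u : H1loc) : (c • u).1 = c • u.1 := rfl

instance : AddCommGroup H1loc where
  add_assoc a b c := Subtype.ext (add_assoc a.1 b.1 c.1)
  zero_add a := Subtype.ext (zero_add a.1)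
  add_zero a := Subtype.ext (add_zero a.1)
  add_comm a b := Subtype.ext (add_comm a.1 b.1)
  neg_add_cancel a := Subtype.ext (neg_add_cancel a.1)
  nsmul := nsmulRec
  zsmul := zsmulRec

instance : Module ℝ H1loc where
  one_smul u := Subtype.ext (one_smul ℝ u.1)
  mul_smul a b u := Subtype.ext (mul_smul a b u.1)
  smul_zero a := Subtype.ext (smul_zero (M := ℝ) (A := ℝ → ℝ) a)
  smul_add a u v := Subtype.ext (smul_add a u.1 v.1)
  add_smul a b u := Subtype.ext (add_smul a b u.1)
  zero_smul u := Subtype.ext (zero_smul ℝ u.1)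

end H1loc

/-- The subspace `H¹_o(ℝ)` of odd functions in `H¹_loc(ℝ)`. -/
def Hodd : Submodule ℝ H1loc where
  carrier := { u | ∀ t : ℝ, u.1 (-t) = - u.1 t }
  add_mem' := by
    intro u v hu hv t
    simp only [H1loc.coe_add, Pi.add_apply, hu t, hv t]
    ring
  zero_mem' := by intro t; simp only [H1loc.coe_zero, Pi.zero_apply, neg_zero]
  smul_mem' := by
    intro c u hu t
    simp only [H1loc.coe_smul, Pi.smul_apply, hu t, smul_eq_mul]
    ring

/-- The subspace `X_ω` of odd `ω`-periodic functions in `H¹_loc(ℝ)`. -/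
def Xomega (ω : ℝ) : Submodule ℝ H1loc where
  carrier := { u | (∀ t : ℝ, u.1 (-t) = - u.1 t) ∧ ∀ t : ℝ, u.1 (t + ω) = u.1 t }
  add_mem' := by
    intro u v hu hv
    refine ⟨fun t => ?_, fun t => ?_⟩
    · simp only [H1loc.coe_add, Pi.add_apply, hu.1 t, hv.1 t]; ring
    · simp only [H1loc.coe_add, Pi.add_apply, hu.2 t, hv.2 t]
  zero_mem' := ⟨fun t => by simp only [H1loc.coe_zero, Pi.zero_apply, neg_zero], fun t => by simp only [H1loc.coe_zero, Pi.zero_apply]⟩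
  smul_mem' := by
    intro c u hu
    refine ⟨fun t => ?_, fun t => ?_⟩
    · simp only [H1loc.coe_smul, Pi.smul_apply, hu.1 t, smul_eq_mul]; ring
    · simp only [H1loc.coe_smul, Pi.smul_apply, hu.2 t]

/-- The set `Φ_{k,ω} ⊆ H¹_o(ℝ)` of odd functions `φ` with `φ(t + ω) = φ(t) + 2πk`. -/
def PhiSet (ω : ℝ) (k : ℕ) : Set H1loc :=
  { φ | (∀ t : ℝ, φ.1 (-t) = - φ.1 t) ∧ ∀ t : ℝ, φ.1 (t + ω) = φ.1 t + 2 * Real.pi * k }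

/-- The action functional of the Lagrangian
`L(x, φ, ẋ, φ̇) = ½(x² + 1)φ̇² + ½ẋ² − x sin φ` over the interval `(0, ω)`. -/
def action (ω : ℝ) (x φ : H1loc) : ℝ :=
  ∫ t in Set.Ioo (0 : ℝ) ω,
    (1 / 2 * (x.1 t ^ 2 + 1) * (H1loc.wderiv φ t) ^ 2
      + 1 / 2 * (H1loc.wderiv x t) ^ 2 - x.1 t * Real.sin (φ.1 t))

end

/-- Statement 9: lower bound for the action. For every `ω > 0` and every pair
`(x, φ) ∈ H¹_o(ℝ) × H¹_o(ℝ)`,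
`S(x,φ) ≥ ½‖φ̇‖²_{L²(0,ω)} + ½‖ẋ‖²_{L²(0,ω)} − (ω^{3/2}/√2)‖ẋ‖_{L²(0,ω)}`. -/
theorem action_lower_bound (ω : ℝ) (hω : 0 < ω) (x φ : H1loc)
    (hx : x ∈ Hodd) (hφ : φ ∈ Hodd) :
    action ω x φ ≥
      1 / 2 * (∫ t in Set.Ioo (0 : ℝ) ω, (H1loc.wderiv φ t) ^ 2)
        + 1 / 2 * (∫ t in Set.Ioo (0 : ℝ) ω, (H1loc.wderiv x t) ^ 2)
        - ω ^ ((3 : ℝ) / 2) / Real.sqrt 2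
            * Real.sqrt (∫ t in Set.Ioo (0 : ℝ) ω, (H1loc.wderiv x t) ^ 2) := by
  
  classical
  set x' := H1loc.wderiv x with hx'def
  set φ' := H1loc.wderiv φ with hφ'def
  set A := ∫ t in Set.Ioo (0 : ℝ) ω, x' t ^ 2 with hAdef
  set B := ∫ t in Set.Ioo (0 : ℝ) ω, φ' t ^ 2 with hBdef
  obtain ⟨n, hn⟩ := exists_nat_gt ω
  have hn0 : (0 : ℝ) < n := lt_trans hω hn
  have hsub : Set.Ioo (0 : ℝ) ω ⊆ Set.Ioo (-(n : ℝ)) n :=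
    fun s hs => ⟨by linarith [hs.1], lt_trans hs.2 hn⟩
  have hx'mem : MemLp x' 2 (volume.restrict (Set.Ioo (0 : ℝ) ω)) :=
    (x.wderiv_memL2loc n).mono_measure (Measure.restrict_mono hsub le_rfl)
  have hφ'mem : MemLp φ' 2 (volume.restrict (Set.Ioo (0 : ℝ) ω)) :=
    (φ.wderiv_memL2loc n).mono_measure (Measure.restrict_mono hsub le_rfl)
  have hIx2 : IntegrableOn (fun t => x' t ^ 2) (Set.Ioo (0 : ℝ) ω) volume :=
    hx'mem.integrable_sq
  have hIφ2 : IntegrableOn (fun t => φ' t ^ 2) (Set.Ioo (0 : ℝ) ω) volume :=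
    hφ'mem.integrable_sq
  have hA0 : 0 ≤ A := setIntegral_nonneg measurableSet_Ioo fun t _ => sq_nonneg _
  have hcx : Continuous x.1 := x.2.1
  have hcφ : Continuous φ.1 := φ.2.1
  have hIXabs : IntegrableOn (fun t => |x.1 t|) (Set.Ioo (0 : ℝ) ω) volume :=
    (hcx.abs.integrableOn_Ioc).mono_set Set.Ioo_subset_Ioc_self
  have hIxsin : IntegrableOn (fun t => x.1 t * Real.sin (φ.1 t)) (Set.Ioo (0 : ℝ) ω) volume :=
    ((hcx.mul (Real.continuous_sin.comp hcφ)).integrableOn_Ioc).mono_set Set.Ioo_subset_Ioc_self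
  -- integrability of the first term of the Lagrangian
  obtain ⟨C, hC⟩ := (isCompact_Icc (a := (0 : ℝ)) (b := ω)).exists_bound_of_continuousOn
    ((hcx.pow 2).add continuous_const).continuousOn
  have hIterm1 : IntegrableOn (fun t => 1 / 2 * (x.1 t ^ 2 + 1) * φ' t ^ 2)
      (Set.Ioo (0 : ℝ) ω) volume := by
    have hb : ∀ᵐ t ∂(volume.restrict (Set.Ioo (0 : ℝ) ω)), ‖x.1 t ^ 2 + 1‖ ≤ C := by
      filter_upwards [ae_restrict_mem measurableSet_Ioo] with t ht
      exact hC t ⟨ht.1.le, ht.2.le⟩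
    have := (hIφ2.bdd_mul (((hcx.pow 2).add continuous_const).aestronglyMeasurable.restrict) hb)
    exact (this.const_mul (1 / 2)).congr
      (Filter.Eventually.of_forall fun t => by simp only [Pi.add_apply, Pi.pow_apply]; ring)
  -- the full integrand is integrable
  have hIf : IntegrableOn (fun t => 1 / 2 * (x.1 t ^ 2 + 1) * φ' t ^ 2
      + 1 / 2 * x' t ^ 2 - x.1 t * Real.sin (φ.1 t)) (Set.Ioo (0 : ℝ) ω) volume :=
    (hIterm1.add (hIx2.const_mul (1 / 2))).sub hIxsin
  -- the lower-bound integrand is integrable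
  have hIg : IntegrableOn (fun t => 1 / 2 * φ' t ^ 2 + 1 / 2 * x' t ^ 2 - |x.1 t|)
      (Set.Ioo (0 : ℝ) ω) volume :=
    ((hIφ2.const_mul (1 / 2)).add (hIx2.const_mul (1 / 2))).sub hIXabs
  -- pointwise lower bound
  have hle : ∀ t : ℝ, 1 / 2 * φ' t ^ 2 + 1 / 2 * x' t ^ 2 - |x.1 t| ≤
      1 / 2 * (x.1 t ^ 2 + 1) * φ' t ^ 2 + 1 / 2 * x' t ^ 2 - x.1 t * Real.sin (φ.1 t) := by
    intro t
    have h1 : x.1 t * Real.sin (φ.1 t) ≤ |x.1 t| := by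
      nlinarith [Real.sin_le_one (φ.1 t), Real.neg_one_le_sin (φ.1 t),
        le_abs_self (x.1 t), neg_abs_le (x.1 t)]
    nlinarith [sq_nonneg (x.1 t * φ' t)]
  -- step 1 : action ≥ ∫ g
  have step1 : (∫ t in Set.Ioo (0 : ℝ) ω,
      (1 / 2 * φ' t ^ 2 + 1 / 2 * x' t ^ 2 - |x.1 t|)) ≤ action ω x φ :=
    integral_mono hIg hIf hle
  -- split the integral of g
  have hsplit : (∫ t in Set.Ioo (0 : ℝ) ω,
      (1 / 2 * φ' t ^ 2 + 1 / 2 * x' t ^ 2 - |x.1 t|)) =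
      1 / 2 * B + 1 / 2 * A - ∫ t in Set.Ioo (0 : ℝ) ω, |x.1 t| := by
    have hIgsum : IntegrableOn (fun t => 1 / 2 * φ' t ^ 2 + 1 / 2 * x' t ^ 2)
        (Set.Ioo (0 : ℝ) ω) volume := (hIφ2.const_mul (1 / 2)).add (hIx2.const_mul (1 / 2))
    rw [integral_sub hIgsum hIXabs,
      integral_add (hIφ2.const_mul (1 / 2)) (hIx2.const_mul (1 / 2)),
      integral_const_mul, integral_const_mul, hAdef, hBdef]
  -- oddness gives x 0 = 0
  have hx0 : x.1 0 = 0 := by have := hx 0; simp only [neg_zero] at this; linarith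
  -- pointwise bound on |x t|
  have hptw : ∀ t ∈ Set.Ioo (0 : ℝ) ω, |x.1 t| ≤ Real.sqrt A * Real.sqrt t := by
    intro t ht
    have ht0 : 0 < t := ht.1
    have hsub2 : Set.Ioc (0 : ℝ) t ⊆ Set.Ioo (0 : ℝ) ω :=
      fun s hs => ⟨hs.1, lt_of_le_of_lt hs.2 ht.2⟩
    have hmem : MemLp x' 2 (volume.restrict (Set.Ioc (0 : ℝ) t)) :=
      hx'mem.mono_measure (Measure.restrict_mono hsub2 le_rfl)
    have hxrepr : x.1 t = ∫ s in (0 : ℝ)..t, x' s := by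
      rw [x.integral_wderiv t, hx0, zero_add]
    have habs : |x.1 t| ≤ ∫ s in (0 : ℝ)..t, |x' s| := by
      rw [hxrepr]; exact intervalIntegral.abs_integral_le_integral_abs ht0.le
    have hioc : (∫ s in (0 : ℝ)..t, |x' s|) = ∫ s in Set.Ioc (0 : ℝ) t, |x' s| :=
      intervalIntegral.integral_of_le ht0.le
    have hconj : Real.HolderConjugate 2 2 := ⟨by norm_num, by norm_num, by norm_num⟩
    have hmemabs : MemLp (fun s => |x' s|) (ENNReal.ofReal 2)
        (volume.restrict (Set.Ioc (0 : ℝ) t)) := by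
      have := hmem.norm
      simpa [Real.norm_eq_abs] using this
    have hmem1 : MemLp (fun _ : ℝ => (1 : ℝ)) (ENNReal.ofReal 2)
        (volume.restrict (Set.Ioc (0 : ℝ) t)) := memLp_const 1
    have hholder := integral_mul_le_Lp_mul_Lq_of_nonneg hconj
      (Filter.Eventually.of_forall fun s => abs_nonneg (x' s))
      (Filter.Eventually.of_forall fun _ => zero_le_one) hmemabs hmem1
    simp only [mul_one, Real.one_rpow] at hholder
    have hone : (∫ _ in Set.Ioc (0 : ℝ) t, (1 : ℝ)) = t := by
      simp [Real.volume_Ioc, ht0.le]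
    have hsq : (∫ s in Set.Ioc (0 : ℝ) t, |x' s| ^ (2 : ℝ)) =
        ∫ s in Set.Ioc (0 : ℝ) t, x' s ^ 2 := by
      refine integral_congr_ae (Filter.Eventually.of_forall fun s => ?_)
      show |x' s| ^ (2 : ℝ) = x' s ^ 2
      rw [Real.rpow_two, sq_abs]
    have hmono : (∫ s in Set.Ioc (0 : ℝ) t, x' s ^ 2) ≤ A :=
      setIntegral_mono_set hIx2
        (Filter.Eventually.of_forall fun s => sq_nonneg _)
        (HasSubset.Subset.eventuallyLE hsub2)
    have hInt2 : (∫ s in Set.Ioc (0 : ℝ) t, x' s ^ 2) ≥ 0 :=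
      setIntegral_nonneg measurableSet_Ioc fun s _ => sq_nonneg _
    calc |x.1 t| ≤ ∫ s in Set.Ioc (0 : ℝ) t, |x' s| := by rw [← hioc]; exact habs
      _ ≤ (∫ s in Set.Ioc (0 : ℝ) t, |x' s| ^ (2 : ℝ)) ^ ((1 : ℝ) / 2)
            * (∫ _ in Set.Ioc (0 : ℝ) t, (1 : ℝ)) ^ ((1 : ℝ) / 2) := hholder
      _ = (∫ s in Set.Ioc (0 : ℝ) t, x' s ^ 2) ^ ((1 : ℝ) / 2) * t ^ ((1 : ℝ) / 2) := by
            rw [hsq, hone]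
      _ ≤ A ^ ((1 : ℝ) / 2) * t ^ ((1 : ℝ) / 2) := by
            gcongr
      _ = Real.sqrt A * Real.sqrt t := by rw [Real.sqrt_eq_rpow, Real.sqrt_eq_rpow]
  -- integrate the pointwise bound
  have hIsq : IntegrableOn (fun t => Real.sqrt A * Real.sqrt t) (Set.Ioo (0 : ℝ) ω) volume :=
    ((continuous_const.mul Real.continuous_sqrt).integrableOn_Ioc).mono_set
      Set.Ioo_subset_Ioc_self
  have hxint : (∫ t in Set.Ioo (0 : ℝ) ω, |x.1 t|) ≤
      Real.sqrt A * (2 / 3 * ω ^ ((3 : ℝ) / 2)) := by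
    have h1 : (∫ t in Set.Ioo (0 : ℝ) ω, |x.1 t|) ≤
        ∫ t in Set.Ioo (0 : ℝ) ω, Real.sqrt A * Real.sqrt t :=
      setIntegral_mono_on hIXabs hIsq measurableSet_Ioo hptw
    have h2 : (∫ t in Set.Ioo (0 : ℝ) ω, Real.sqrt A * Real.sqrt t) =
        Real.sqrt A * ∫ t in Set.Ioo (0 : ℝ) ω, Real.sqrt t := integral_const_mul _ _
    have h3 : (∫ t in Set.Ioo (0 : ℝ) ω, Real.sqrt t) = 2 / 3 * ω ^ ((3 : ℝ) / 2) := by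
      rw [← integral_Ioc_eq_integral_Ioo, ← intervalIntegral.integral_of_le hω.le]
      simp_rw [Real.sqrt_eq_rpow]
      rw [integral_rpow (Or.inl (by norm_num))]
      rw [Real.zero_rpow (by norm_num)]
      rw [show (1 : ℝ) / 2 + 1 = (3 : ℝ) / 2 by norm_num]
      ring
    rw [h2, h3] at h1
    exact h1
  -- the numerical constant
  have hW : 0 ≤ ω ^ ((3 : ℝ) / 2) := Real.rpow_nonneg hω.le _
  have hsA : 0 ≤ Real.sqrt A := Real.sqrt_nonneg A
  have h2pos : (0 : ℝ) < Real.sqrt 2 := Real.sqrt_pos.mpr two_pos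
  have hfrac : (2 : ℝ) / 3 ≤ 1 / Real.sqrt 2 := by
    rw [div_le_div_iff₀ (by norm_num) h2pos]
    nlinarith [Real.sq_sqrt (le_of_lt (two_pos (α := ℝ))), h2pos.le]
  have hkey : Real.sqrt A * (2 / 3 * ω ^ ((3 : ℝ) / 2)) ≤
      ω ^ ((3 : ℝ) / 2) / Real.sqrt 2 * Real.sqrt A := by
    have h := mul_le_mul_of_nonneg_right hfrac (mul_nonneg hW hsA)
    calc Real.sqrt A * (2 / 3 * ω ^ ((3 : ℝ) / 2))
        = 2 / 3 * (ω ^ ((3 : ℝ) / 2) * Real.sqrt A) := by ring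
      _ ≤ 1 / Real.sqrt 2 * (ω ^ ((3 : ℝ) / 2) * Real.sqrt A) := h
      _ = ω ^ ((3 : ℝ) / 2) / Real.sqrt 2 * Real.sqrt A := by ring
  rw [hsplit] at step1
  linarith
end

section
/- Let ω > 0, k a positive integer. Any sequence (x_n, φ_n) in E_{k,ω} that is minimizing for the action functional S (i.e. S(x_n, φ_n) → inf_{E_{k,ω}} S) is bounded in X_ω × H¹_o(ℝ): the sequences ‖ẋ_n‖_{L²(0,ω)} and ‖φ̇_n‖_{L²(0,ω)} are bounded. -/
open MeasureTheory

noncomputable section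

open MeasureTheory Set in
lemma action_lower_bound_s11 (ω : ℝ) (hω : 0 < ω) (u p : H1loc)
    (hodd : ∀ t : ℝ, u.1 (-t) = - u.1 t) :
    (∫ t in Set.Ioo (0 : ℝ) ω, (H1loc.wderiv u t) ^ 2) / 4
      + (∫ t in Set.Ioo (0 : ℝ) ω, (H1loc.wderiv p t) ^ 2) / 2 - ω ^ 3
      ≤ action ω u p := by
  set u' := H1loc.wderiv u with hu'
  set p' := H1loc.wderiv p with hp'
  set A2 := ∫ t in Set.Ioo (0 : ℝ) ω, u' t ^ 2 with hA2
  set B2 := ∫ t in Set.Ioo (0 : ℝ) ω, p' t ^ 2 with hB2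
  obtain ⟨n, hn⟩ := exists_nat_gt ω
  have hn0 : (0 : ℝ) < n := lt_trans hω hn
  have hsub : Set.Ioo (0 : ℝ) ω ⊆ Set.Ioo (-(n : ℝ)) n :=
    fun t ht => ⟨by linarith [ht.1], by linarith [ht.2]⟩
  -- integrability of squares
  have hu2big : IntegrableOn (fun t => u' t ^ 2) (Set.Ioo (-(n : ℝ)) n) volume :=
    (u.wderiv_memL2loc n).integrable_sq
  have hp2big : IntegrableOn (fun t => p' t ^ 2) (Set.Ioo (-(n : ℝ)) n) volume :=
    (p.wderiv_memL2loc n).integrable_sq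
  have hu2 : IntegrableOn (fun t => u' t ^ 2) (Set.Ioo (0 : ℝ) ω) volume :=
    hu2big.mono_set hsub
  have hp2 : IntegrableOn (fun t => p' t ^ 2) (Set.Ioo (0 : ℝ) ω) volume :=
    hp2big.mono_set hsub
  -- bound for u on [0, ω]
  obtain ⟨Cu, hCu⟩ := (isCompact_Icc (a := (0:ℝ)) (b := ω)).exists_bound_of_continuousOn
    u.2.1.continuousOn
  -- integrability of the three terms
  have hcont_u : Continuous u.1 := u.2.1
  have hcont_p : Continuous p.1 := p.2.1
  have hf1 : IntegrableOn
      (fun t => 1 / 2 * (u.1 t ^ 2 + 1) * p' t ^ 2) (Set.Ioo (0 : ℝ) ω) volume := by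
    have : Integrable (fun t => (1 / 2 * (u.1 t ^ 2 + 1)) * p' t ^ 2)
        (volume.restrict (Set.Ioo (0 : ℝ) ω)) := by
      refine Integrable.bdd_mul (c := 1 / 2 * (Cu ^ 2 + 1)) hp2
        (continuous_const.mul ((hcont_u.pow 2).add continuous_const)).aestronglyMeasurable ?_
      filter_upwards [ae_restrict_mem measurableSet_Ioo] with t ht
      have h1 : ‖u.1 t‖ ≤ Cu := hCu t ⟨ht.1.le, ht.2.le⟩
      have h2 : |u.1 t| ≤ Cu := by simpa [Real.norm_eq_abs] using h1
      have h3 : u.1 t ^ 2 ≤ Cu ^ 2 := by nlinarith [abs_nonneg (u.1 t), sq_abs (u.1 t)]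
      have h4 : (0:ℝ) ≤ 1 / 2 * (u.1 t ^ 2 + 1) := by positivity
      rw [Real.norm_eq_abs, abs_of_nonneg h4]
      nlinarith
    simpa [mul_assoc, IntegrableOn] using this
  have hf2 : IntegrableOn (fun t => 1 / 2 * u' t ^ 2) (Set.Ioo (0 : ℝ) ω) volume :=
    hu2.const_mul _
  have hf3 : IntegrableOn (fun t => u.1 t * Real.sin (p.1 t)) (Set.Ioo (0 : ℝ) ω) volume :=
    ((hcont_u.mul (Real.continuous_sin.comp hcont_p)).continuousOn.integrableOn_Icc).mono_set
      Set.Ioo_subset_Icc_self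
  -- split the action integral
  have hsplit : action ω u p =
      (∫ t in Set.Ioo (0 : ℝ) ω, 1 / 2 * (u.1 t ^ 2 + 1) * p' t ^ 2)
      + (∫ t in Set.Ioo (0 : ℝ) ω, 1 / 2 * u' t ^ 2)
      - ∫ t in Set.Ioo (0 : ℝ) ω, u.1 t * Real.sin (p.1 t) := by
    have hf12 : IntegrableOn
        (fun t => 1 / 2 * (u.1 t ^ 2 + 1) * p' t ^ 2 + 1 / 2 * u' t ^ 2)
        (Set.Ioo (0 : ℝ) ω) volume := hf1.add hf2
    rw [action, integral_sub hf12 hf3, integral_add hf1 hf2]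
  -- first term lower bound
  have hterm1 : 1 / 2 * B2 ≤
      ∫ t in Set.Ioo (0 : ℝ) ω, 1 / 2 * (u.1 t ^ 2 + 1) * p' t ^ 2 := by
    have := setIntegral_mono_on (hp2.const_mul (1/2 : ℝ)) hf1 measurableSet_Ioo
      (fun t _ => by nlinarith [sq_nonneg (u.1 t), sq_nonneg (p' t)])
    calc 1 / 2 * B2 = ∫ t in Set.Ioo (0 : ℝ) ω, 1 / 2 * p' t ^ 2 := by
          rw [hB2, MeasureTheory.integral_const_mul]
      _ ≤ _ := this
  -- interval integrability facts for u'
  have hii : ∀ a b : ℝ, IntervalIntegrable u' volume a b :=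
    intervalIntegrable_of_memL2loc u.wderiv_memL2loc
  have hiiabs : ∀ a b : ℝ, IntervalIntegrable (fun s => |u' s|) volume a b :=
    fun a b => (hii a b).abs
  have hsqii : IntervalIntegrable (fun s => u' s ^ 2) volume 0 ω := by
    rw [intervalIntegrable_iff, Set.uIoc_of_le hω.le]
    exact hu2big.mono_set (fun t ht => ⟨by linarith [ht.1], by linarith [ht.2]⟩)
  set K := ∫ s in (0:ℝ)..ω, |u' s| with hK
  have hu0 : u.1 0 = 0 := by have := hodd 0; rw [neg_zero] at this; linarith
  -- |u t| ≤ K on [0, ω]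
  have hub : ∀ t ∈ Set.Icc (0:ℝ) ω, |u.1 t| ≤ K := by
    intro t ht
    have heq : u.1 t = ∫ s in (0:ℝ)..t, u' s := by
      rw [u.integral_wderiv t, hu0, zero_add]
    have h1 : |u.1 t| ≤ ∫ s in (0:ℝ)..t, |u' s| := by
      rw [heq]; exact intervalIntegral.abs_integral_le_integral_abs ht.1
    have h2 : (∫ s in (0:ℝ)..t, |u' s|) + ∫ s in t..ω, |u' s| = K :=
      intervalIntegral.integral_add_adjacent_intervals (hiiabs 0 t) (hiiabs t ω)
    have h3 : (0:ℝ) ≤ ∫ s in t..ω, |u' s| :=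
      intervalIntegral.integral_nonneg ht.2 (fun s _ => abs_nonneg _)
    linarith
  -- K ≤ A2/(4ω) + ω²
  have hKb : K ≤ A2 / (4 * ω) + ω ^ 2 := by
    have hmono : K ≤ ∫ s in (0:ℝ)..ω, (1 / (4 * ω) * u' s ^ 2 + ω) := by
      refine intervalIntegral.integral_mono_on hω.le (hiiabs 0 ω)
        ((hsqii.const_mul _).add (intervalIntegrable_const)) (fun s _ => ?_)
      have h3 : 4 * ω * |u' s| ≤ u' s ^ 2 + 4 * ω ^ 2 := by
        nlinarith [sq_nonneg (|u' s| - 2 * ω), sq_abs (u' s)]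
      have h4 : 1 / (4 * ω) * u' s ^ 2 + ω = (u' s ^ 2 + 4 * ω ^ 2) / (4 * ω) := by
        field_simp
      rw [h4, le_div_iff₀ (by linarith : (0:ℝ) < 4 * ω)]
      nlinarith [h3]
    have heq1 : (∫ s in (0:ℝ)..ω, (1 / (4 * ω) * u' s ^ 2 + ω))
        = 1 / (4 * ω) * (∫ s in (0:ℝ)..ω, u' s ^ 2) + ω * ω := by
      rw [intervalIntegral.integral_add (hsqii.const_mul _) intervalIntegrable_const,
        intervalIntegral.integral_const_mul, intervalIntegral.integral_const]
      simp [smul_eq_mul, sub_zero, mul_comm]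
    have heq2 : (∫ s in (0:ℝ)..ω, u' s ^ 2) = A2 := by
      rw [intervalIntegral.integral_of_le hω.le, hA2,
        MeasureTheory.integral_Ioc_eq_integral_Ioo]
    rw [heq1, heq2] at hmono
    calc K ≤ 1 / (4 * ω) * A2 + ω * ω := hmono
      _ = A2 / (4 * ω) + ω ^ 2 := by ring
  -- third term upper bound
  have hterm3 : (∫ t in Set.Ioo (0 : ℝ) ω, u.1 t * Real.sin (p.1 t)) ≤ A2 / 4 + ω ^ 3 := by
    have hle : (∫ t in Set.Ioo (0 : ℝ) ω, u.1 t * Real.sin (p.1 t))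
        ≤ ∫ _t in Set.Ioo (0 : ℝ) ω, K := by
      refine setIntegral_mono_on hf3 (integrableOn_const (ne_of_lt ?_)) measurableSet_Ioo
        (fun t ht => ?_)
      · rw [Real.volume_Ioo]; exact ENNReal.ofReal_lt_top
      · have h1 : u.1 t * Real.sin (p.1 t) ≤ |u.1 t * Real.sin (p.1 t)| := le_abs_self _
        have h2 : |u.1 t * Real.sin (p.1 t)| ≤ |u.1 t| := by
          rw [abs_mul]
          exact mul_le_of_le_one_right (abs_nonneg _) (Real.abs_sin_le_one _)
        have h3 := hub t ⟨ht.1.le, ht.2.le⟩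
        linarith
    have hconst : (∫ _t in Set.Ioo (0 : ℝ) ω, K) = ω * K := by
      rw [setIntegral_const, measureReal_def, Real.volume_Ioo, sub_zero, ENNReal.toReal_ofReal hω.le,
        smul_eq_mul]
    have hA2nn : (0:ℝ) ≤ A2 := setIntegral_nonneg measurableSet_Ioo (fun t _ => sq_nonneg _)
    have : ω * K ≤ ω * (A2 / (4 * ω) + ω ^ 2) := by
      exact mul_le_mul_of_nonneg_left hKb hω.le
    have hωne : ω ≠ 0 := ne_of_gt hω
    have : ω * (A2 / (4 * ω) + ω ^ 2) = A2 / 4 + ω ^ 3 := by field_simp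
    calc (∫ t in Set.Ioo (0 : ℝ) ω, u.1 t * Real.sin (p.1 t))
        ≤ ω * K := hle.trans_eq hconst
      _ ≤ ω * (A2 / (4 * ω) + ω ^ 2) := mul_le_mul_of_nonneg_left hKb hω.le
      _ = A2 / 4 + ω ^ 3 := this
  -- second term
  have hterm2 : (∫ t in Set.Ioo (0 : ℝ) ω, 1 / 2 * u' t ^ 2) = 1 / 2 * A2 := by
    rw [hA2, MeasureTheory.integral_const_mul]
  rw [hsplit, hterm2]
  linarith

end

open Filter in
/-- Statement 17: any minimizing sequence `(x_n, φ_n) ∈ E_{k,ω} = X_ω × Φ_{k,ω}` for the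
action functional (i.e. `S(x_n, φ_n) → inf S`) is bounded: the norms
`‖ẋ_n‖_{L²(0,ω)}` and `‖φ̇_n‖_{L²(0,ω)}` are bounded. -/
theorem minimizing_sequence_bounded (ω : ℝ) (hω : 0 < ω) (k : ℕ) (hk : 0 < k)
    (x φ : ℕ → H1loc)
    (hxmem : ∀ n, x n ∈ Xomega ω) (hφmem : ∀ n, φ n ∈ PhiSet ω k)
    (hmin : Tendsto (fun n => action ω (x n) (φ n)) atTop
      (nhds (sInf { r : ℝ | ∃ a b : H1loc,
        a ∈ Xomega ω ∧ b ∈ PhiSet ω k ∧ action ω a b = r }))) :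
    ∃ C : ℝ,
      (∀ n, Real.sqrt (∫ t in Set.Ioo (0 : ℝ) ω, (H1loc.wderiv (x n) t) ^ 2) ≤ C) ∧
      (∀ n, Real.sqrt (∫ t in Set.Ioo (0 : ℝ) ω, (H1loc.wderiv (φ n) t) ^ 2) ≤ C) := by
  have hL := action_lower_bound_s11 ω hω
  obtain ⟨M, hM⟩ := hmin.bddAbove_range
  have hMn : ∀ n, action ω (x n) (φ n) ≤ M := fun n => hM ⟨n, rfl⟩
  set D := max M 0 + ω ^ 3 with hD
  have hDnn : (0:ℝ) ≤ D := by positivity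
  refine ⟨Real.sqrt (4 * D), fun n => ?_, fun n => ?_⟩ <;>
  · have h1 := hL (x n) (φ n) (hxmem n).1
    have h2 := hMn n
    have hxnn : (0:ℝ) ≤ ∫ t in Set.Ioo (0 : ℝ) ω, (H1loc.wderiv (x n) t) ^ 2 :=
      MeasureTheory.setIntegral_nonneg measurableSet_Ioo (fun t _ => sq_nonneg _)
    have hφnn : (0:ℝ) ≤ ∫ t in Set.Ioo (0 : ℝ) ω, (H1loc.wderiv (φ n) t) ^ 2 :=
      MeasureTheory.setIntegral_nonneg measurableSet_Ioo (fun t _ => sq_nonneg _)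
    have hMD : M ≤ max M 0 := le_max_left _ _
    exact Real.sqrt_le_sqrt (by linarith)
end
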